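/- arXiv:2106.13659 — 4 statements merged into one kernel-verified Lean document; each statement's English description precedes it below -/
import Mathlib

section
/- Let x₀, x₁, x₂, x₃ be affinely independent points of ℝ³ and let A : ℝ³ → ℝ³ be an affine map with linear part L. Then cm(x₀,x₁,x₂,x₃) > 0 and (det L)² = cm(A x₀, A x₁, A x₂, A x₃) / cm(x₀,x₁,x₂,x₃); equivalently, |det L| = √( cm(A x₀, A x₁, A x₂, A x₃) / cm(x₀,x₁,x₂,x₃) ). -/
/-- The Cayley–Menger matrix of the `n` points `x 0, …, x (n-1)`:
the `(n+1) × (n+1)` matrix whose `(0,0)` entry is `0`, whose remaining entries in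
row `0` and column `0` are `1`, and whose `(i+1, j+1)` entry is `dist (x i) (x j) ^ 2`. -/
noncomputable def cmMatrix {E : Type*} [MetricSpace E] {n : ℕ} (x : Fin n → E) :
    Matrix (Fin (n + 1)) (Fin (n + 1)) ℝ :=
  Matrix.of fun i j =>
    Fin.cases (Fin.cases (0 : ℝ) (fun _ => 1) j)
      (fun i' => Fin.cases (1 : ℝ) (fun j' => dist (x i') (x j') ^ 2) j) i

/-- The Cayley–Menger determinant of the points `x 0, …, x (n-1)`. -/
noncomputable def cm {E : Type*} [MetricSpace E] {n : ℕ} (x : Fin n → E) : ℝ :=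
  (cmMatrix x).det

set_option maxHeartbeats 1000000 in
private lemma det5_poly (a b c d e f : ℝ) :
    Matrix.det !![(0:ℝ),1,1,1,1; 1,0,a,b,c; 1,a,0,d,e; 1,b,d,0,f; 1,c,e,f,0] =
      -2*d*e*f + 2*c*d*f + 2*c*d*e - 2*c*d^2 - 2*c^2*d + 2*b*e*f - 2*b*e^2 + 2*b*d*e
      - 2*b*c*f + 2*b*c*e + 2*b*c*d - 2*b^2*e - 2*a*f^2 + 2*a*e*f + 2*a*d*f + 2*a*c*f
      - 2*a*c*e + 2*a*c*d + 2*a*b*f + 2*a*b*e - 2*a*b*d - 2*a^2*f := by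
  simp (config := {decide := true}) [Matrix.det_succ_row_zero, Fin.sum_univ_succ, Fin.succAbove,
    show Fin.castSucc (2:Fin 3) = (2:Fin 4) from rfl,
    show Fin.castSucc (2:Fin 4) = (2:Fin 5) from rfl,
    show Fin.succ (2:Fin 3) = (3:Fin 4) from rfl,
    show Fin.castSucc (3:Fin 4) = (3:Fin 5) from rfl,
    show ((3:Fin 4):ℕ) = 3 from rfl, show Fin.succ (3:Fin 4) = (4:Fin 5) from rfl,
    Matrix.cons_val_two, Matrix.cons_val_three, Matrix.cons_val_four]
  ring

private lemma det5_poly' (a b c d e f a' b' c' d' e' f' z0 z1 z2 z3 : ℝ)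
    (ha : a' = a) (hb : b' = b) (hc : c' = c) (hd : d' = d) (he : e' = e) (hf : f' = f)
    (h0 : z0 = 0) (h1 : z1 = 0) (h2 : z2 = 0) (h3 : z3 = 0) :
    Matrix.det !![(0:ℝ),1,1,1,1; 1,z0,a,b,c; 1,a',z1,d,e; 1,b',d',z2,f; 1,c',e',f',z3] =
      -2*d*e*f + 2*c*d*f + 2*c*d*e - 2*c*d^2 - 2*c^2*d + 2*b*e*f - 2*b*e^2 + 2*b*d*e
      - 2*b*c*f + 2*b*c*e + 2*b*c*d - 2*b^2*e - 2*a*f^2 + 2*a*e*f + 2*a*d*f + 2*a*c*f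
      - 2*a*c*e + 2*a*c*d + 2*a*b*f + 2*a*b*e - 2*a*b*d - 2*a^2*f := by
  rw [ha, hb, hc, hd, he, hf, h0, h1, h2, h3]
  exact det5_poly a b c d e f

private lemma dist_sq_euclidean (a b : EuclideanSpace ℝ (Fin 3)) :
    dist a b ^ 2 = ∑ k, (a k - b k) ^ 2 := by
  rw [EuclideanSpace.dist_eq, Real.sq_sqrt (by positivity)]
  simp [Real.dist_eq, sq_abs]

set_option maxHeartbeats 2000000 in
private lemma cm_eq (x : Fin 4 → EuclideanSpace ℝ (Fin 3)) :
    cm x = 8 * (Matrix.det (Matrix.of fun i j : Fin 3 => x i.succ j - x 0 j)) ^ 2 := by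
  have hmat : cmMatrix x = !![0,1,1,1,1;
      1, dist (x 0) (x 0)^2, dist (x 0) (x 1)^2, dist (x 0) (x 2)^2, dist (x 0) (x 3)^2;
      1, dist (x 1) (x 0)^2, dist (x 1) (x 1)^2, dist (x 1) (x 2)^2, dist (x 1) (x 3)^2;
      1, dist (x 2) (x 0)^2, dist (x 2) (x 1)^2, dist (x 2) (x 2)^2, dist (x 2) (x 3)^2;
      1, dist (x 3) (x 0)^2, dist (x 3) (x 1)^2, dist (x 3) (x 2)^2, dist (x 3) (x 3)^2] := by
    ext i j
    fin_cases i <;> fin_cases j <;> rfl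
  have hdc : ∀ i j : Fin 4, dist (x i) (x j) ^ 2 = dist (x j) (x i) ^ 2 :=
    fun i j => by rw [dist_comm]
  have hds : ∀ i : Fin 4, dist (x i) (x i) ^ 2 = 0 := fun i => by simp
  rw [cm, hmat, det5_poly' _ _ _ _ _ _ _ _ _ _ _ _ _ _ _ _
    (hdc 1 0) (hdc 2 0) (hdc 3 0) (hdc 2 1) (hdc 3 1) (hdc 3 2)
    (hds 0) (hds 1) (hds 2) (hds 3)]
  simp only [dist_sq_euclidean, Matrix.det_fin_three, Matrix.of_apply, Fin.sum_univ_three]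
  norm_num [show (Fin.succ 0 : Fin 4) = 1 from rfl, show (Fin.succ 1 : Fin 4) = 2 from rfl,
    show (Fin.succ 2 : Fin 4) = 3 from rfl]
  ring

set_option maxHeartbeats 2000000 in
/-- for affinely independent points `x₀, x₁, x₂, x₃` of `ℝ³` and an
affine map `A : ℝ³ → ℝ³` with linear part `L`, one has `cm(x₀,x₁,x₂,x₃) > 0` and
`(det L)² = cm(A x₀, …, A x₃) / cm(x₀, …, x₃)`; equivalently,
`|det L| = √(cm(A x₀, …, A x₃) / cm(x₀, …, x₃))`. -/
theorem jacobian_from_cm_ratio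
    (x : Fin 4 → EuclideanSpace ℝ (Fin 3)) (hx : AffineIndependent ℝ x)
    (A : EuclideanSpace ℝ (Fin 3) →ᵃ[ℝ] EuclideanSpace ℝ (Fin 3)) :
    0 < cm x ∧
      (LinearMap.det A.linear) ^ 2 = cm (fun i => A (x i)) / cm x ∧
      |LinearMap.det A.linear| = Real.sqrt (cm (fun i => A (x i)) / cm x) := by
  classical
  set M : Matrix (Fin 3) (Fin 3) ℝ := Matrix.of fun i j => x i.succ j - x 0 j with hM
  -- linear independence of the rows of M
  have h1 := (affineIndependent_iff_linearIndependent_vsub ℝ x 0).mp hx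
  have h2 : LinearIndependent ℝ (fun i : Fin 3 => x i.succ -ᵥ x 0) := by
    have hinj : Function.Injective
        (fun i : Fin 3 => (⟨i.succ, Fin.succ_ne_zero i⟩ : {j : Fin 4 // j ≠ 0})) := by
      intro a b hab
      exact Fin.succ_injective _ (congrArg Subtype.val hab)
    exact h1.comp (fun i : Fin 3 => (⟨i.succ, Fin.succ_ne_zero i⟩ : {j : Fin 4 // j ≠ 0})) hinj
  have h3 : LinearIndependent ℝ (fun i : Fin 3 => M i) := by
    let e := WithLp.linearEquiv 2 ℝ (Fin 3 → ℝ)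
    have h4 := h2.map' e.toLinearMap e.ker
    exact h4
  have hMdet : M.det ≠ 0 := by
    have := (Matrix.isUnit_iff_isUnit_det M).mp (Matrix.linearIndependent_rows_iff_isUnit.mp h3)
    exact this.ne_zero
  -- the matrix of the linear part
  set b : Module.Basis (Fin 3) ℝ (EuclideanSpace ℝ (Fin 3)) := (EuclideanSpace.basisFun (Fin 3) ℝ).toBasis
    with hb
  set T : Matrix (Fin 3) (Fin 3) ℝ := LinearMap.toMatrix b b A.linear with hT
  have hdetT : LinearMap.det A.linear = T.det := (LinearMap.det_toMatrix b A.linear).symm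
  have hrepr : ∀ (v : EuclideanSpace ℝ (Fin 3)) (j : Fin 3), b.repr v j = v j := by
    intro v j
    rw [hb, OrthonormalBasis.coe_toBasis_repr_apply, EuclideanSpace.basisFun_repr]
  have key : ∀ (v : EuclideanSpace ℝ (Fin 3)) (j : Fin 3),
      A.linear v j = ∑ k, T j k * v k := by
    intro v j
    have h := congrFun (LinearMap.toMatrix_mulVec_repr b b A.linear v) j
    rw [hrepr] at h
    rw [← hT] at h
    rw [← h]
    simp only [Matrix.mulVec, dotProduct]
    exact Finset.sum_congr rfl fun k _ => by rw [hrepr]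
  have hmul : (Matrix.of fun (i j : Fin 3) => A (x i.succ) j - A (x 0) j) = M * T.transpose := by
    ext i j
    have h0 : A (x i.succ) j - A (x 0) j = A.linear (x i.succ -ᵥ x 0) j := by
      rw [AffineMap.linearMap_vsub]; rfl
    rw [Matrix.of_apply, h0, key, Matrix.mul_apply]
    exact Finset.sum_congr rfl fun k _ => by
      rw [Matrix.transpose_apply,
        show (x i.succ -ᵥ x 0) k = Matrix.of (fun i j => x i.succ j - x 0 j) i k from rfl]
      ring
  have hcmx : cm x = 8 * M.det ^ 2 := cm_eq x
  have hcmA : cm (fun i => A (x i)) = 8 * (M.det * T.det) ^ 2 := by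
    rw [cm_eq (fun i => A (x i))]
    congr 2
    rw [show (Matrix.of fun (i j : Fin 3) => (fun i => A (x i)) i.succ j - (fun i => A (x i)) 0 j)
        = M * T.transpose from hmul, Matrix.det_mul, Matrix.det_transpose]
  have hpos : 0 < cm x := by
    rw [hcmx]
    have h5 : 0 < M.det ^ 2 := by positivity
    linarith
  have hratio : cm (fun i => A (x i)) / cm x = (LinearMap.det A.linear) ^ 2 := by
    rw [hcmx, hcmA, hdetT]
    field_simp
  refine ⟨hpos, hratio.symm, ?_⟩
  rw [hratio, Real.sqrt_sq_eq_abs]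
end

section
/- Let n ≥ 3 and let x₀, x₁, …, x_n, x_{n+1} and x'₀, x'₁, …, x'_n, x'_{n+1} be points of ℝ³ with x₀ ≠ x_{n+1} and x'₀ ≠ x'_{n+1}. For j = 1,…,n set σ(j) = j+1 if j < n and σ(n) = 1, and define the polynomial q_j(t) as the determinant of the 5×5 matrix [[0,1,1,1,1],[1,0,a_j,b_j,t²],[1,a_j,0,c_j,e_j],[1,b_j,c_j,0,f_j],[1,t²,e_j,f_j,0]], where a_j = dist(x₀,x_j)², b_j = dist(x₀,x_{σ(j)})², c_j = dist(x_j,x_{σ(j)})², e_j = dist(x_j,x_{n+1})², f_j = dist(x_{σ(j)},x_{n+1})²; define q'_j(t') in the same way from the primed points. Suppose that the system of n equations q'_j(t') = δ · q_j(t), j = 1,…,n, has no solution with δ > 0, t > 0 and t' > 0. Then there is no invertible affine map A : ℝ³ → ℝ³ such that A x_i = x'_i for all i = 0,1,…,n+1. -/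
/-- The Cayley–Menger-type determinant built from the six prescribed squared
distances `d01, d02, d03, d12, d13, d23` of a quadruple of points: the determinant
of the `5 × 5` matrix with `0` in the corner, `1`'s in the rest of the first row
and column, and the `d_{ij}`'s placed symmetrically. -/
noncomputable def cmQ (d01 d02 d03 d12 d13 d23 : ℝ) : ℝ :=
  Matrix.det !![0, 1, 1, 1, 1;
                1, 0, d01, d02, d03;
                1, d01, 0, d12, d13;
                1, d02, d12, 0, d23;
                1, d03, d13, d23, 0]

/-- The polynomial `q_j(t)` of the paper, for a suspension with south pole `x 0`,
north pole `x (n+1)` and equator vertices `x 1, …, x n`: the Cayley–Menger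
determinant of the quadruple `(x 0, x j, x σ(j), x (n+1))` (where `σ(j) = j+1` for
`j < n` and `σ(n) = 1`) in which the unknown squared distance between the two
poles is replaced by `t²`. -/
noncomputable def suspQ (n : ℕ) (x : ℕ → EuclideanSpace ℝ (Fin 3)) (j : ℕ) (t : ℝ) : ℝ :=
  cmQ (dist (x 0) (x j) ^ 2)
      (dist (x 0) (x (if j < n then j + 1 else 1)) ^ 2)
      (t ^ 2)
      (dist (x j) (x (if j < n then j + 1 else 1)) ^ 2)
      (dist (x j) (x (n + 1)) ^ 2)
      (dist (x (if j < n then j + 1 else 1)) (x (n + 1)) ^ 2)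

section Aux

set_option maxHeartbeats 1000000 in
/-- The Cayley–Menger determinant in terms of Gram-matrix data: if the squared
distances come from vectors with squared norms `n1, n2, n3` and inner products
`g12, g13, g23`, the determinant is `8` times the Gram determinant. -/
lemma cmQ_gram (n1 n2 n3 g12 g13 g23 : ℝ) :
    cmQ n1 n2 n3 (n1 + n2 - 2 * g12) (n1 + n3 - 2 * g13) (n2 + n3 - 2 * g23)
      = 8 * (n1 * (n2 * n3 - g23 ^ 2) - g12 * (g12 * n3 - g13 * g23)
              + g13 * (g12 * g23 - g13 * n2)) := by
  unfold cmQ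
  simp [Matrix.det_succ_row_zero, Fin.sum_univ_succ, Fin.succAbove,
    Matrix.cons_val_succ, Fin.castSucc, Fin.castAdd, Fin.castLE]
  ring

/-- The matrix whose columns are the differences `p1 - p0, p2 - p0, p3 - p0`. -/
noncomputable def colMat (p0 p1 p2 p3 : EuclideanSpace ℝ (Fin 3)) : Matrix (Fin 3) (Fin 3) ℝ :=
  Matrix.of fun i j => ![p1, p2, p3] j i - p0 i

lemma dist_sq_fin3 (a b : EuclideanSpace ℝ (Fin 3)) :
    dist a b ^ 2 = (a 0 - b 0) ^ 2 + (a 1 - b 1) ^ 2 + (a 2 - b 2) ^ 2 := by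
  rw [EuclideanSpace.dist_eq, Real.sq_sqrt (by positivity)]
  simp [Fin.sum_univ_three, Real.dist_eq, sq_abs]

/-- The inner product of `a - p0` and `b - p0`. -/
noncomputable def gr (p0 a b : EuclideanSpace ℝ (Fin 3)) : ℝ :=
  (a 0 - p0 0) * (b 0 - p0 0) + (a 1 - p0 1) * (b 1 - p0 1) + (a 2 - p0 2) * (b 2 - p0 2)

lemma dist_sq_polar (p0 a b : EuclideanSpace ℝ (Fin 3)) :
    dist a b ^ 2 = dist p0 a ^ 2 + dist p0 b ^ 2 - 2 * gr p0 a b := by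
  simp only [dist_sq_fin3, gr]; ring

/-- The Cayley–Menger determinant of an actual quadruple of points in `ℝ³`
equals `8` times the square of the determinant of the difference matrix. -/
lemma cmQ_dist_eq (p0 p1 p2 p3 : EuclideanSpace ℝ (Fin 3)) :
    cmQ (dist p0 p1 ^ 2) (dist p0 p2 ^ 2) (dist p0 p3 ^ 2)
        (dist p1 p2 ^ 2) (dist p1 p3 ^ 2) (dist p2 p3 ^ 2)
      = 8 * (colMat p0 p1 p2 p3).det ^ 2 := by
  rw [dist_sq_polar p0 p1 p2, dist_sq_polar p0 p1 p3, dist_sq_polar p0 p2 p3,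
    cmQ_gram, Matrix.det_fin_three]
  simp only [dist_sq_fin3, gr, colMat, Matrix.of_apply, Matrix.cons_val_zero,
    Matrix.cons_val_one, Matrix.head_cons, Matrix.cons_val_two, Matrix.tail_cons]
  ring

/-- Affine image: the column-difference determinant scales by the determinant of
the linear part. -/
lemma colMat_affine (A : EuclideanSpace ℝ (Fin 3) →ᵃ[ℝ] EuclideanSpace ℝ (Fin 3))
    (p0 p1 p2 p3 : EuclideanSpace ℝ (Fin 3)) :
    (colMat (A p0) (A p1) (A p2) (A p3)).det
      = LinearMap.det A.linear * (colMat p0 p1 p2 p3).det := by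
  set B := (EuclideanSpace.basisFun (Fin 3) ℝ).toBasis with hB
  have hmat : colMat (A p0) (A p1) (A p2) (A p3)
      = (LinearMap.toMatrix B B A.linear) * colMat p0 p1 p2 p3 := by
    ext i j
    have main : ∀ q : EuclideanSpace ℝ (Fin 3),
        A q i - A p0 i
          = ∑ k, LinearMap.toMatrix B B A.linear i k * (q k - p0 k) := by
      intro q
      have h1 : A q - A p0 = A.linear (q - p0) := by
        rw [← vsub_eq_sub, ← vsub_eq_sub, AffineMap.linearMap_vsub]
      have h2 : ((LinearMap.toMatrix B B A.linear).mulVec (B.repr (q - p0))) i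
          = B.repr (A.linear (q - p0)) i := by
        rw [LinearMap.toMatrix_mulVec_repr]
      have hrep : ∀ (v : EuclideanSpace ℝ (Fin 3)) (m : Fin 3), B.repr v m = v m := by
        intro v m
        simp [hB, OrthonormalBasis.coe_toBasis_repr_apply, EuclideanSpace.basisFun_repr]
      calc A q i - A p0 i = (A q - A p0) i := by
              simp [PiLp.sub_apply]
        _ = (A.linear (q - p0)) i := by rw [h1]
        _ = B.repr (A.linear (q - p0)) i := by rw [hrep]
        _ = ((LinearMap.toMatrix B B A.linear).mulVec (B.repr (q - p0))) i := h2.symm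
        _ = ∑ k, LinearMap.toMatrix B B A.linear i k * (q k - p0 k) := by
              simp only [Matrix.mulVec, dotProduct, hrep, PiLp.sub_apply]
    have hv : ![A p1, A p2, A p3] j = A (![p1, p2, p3] j) := by
      fin_cases j <;> rfl
    simp only [colMat, Matrix.of_apply, Matrix.mul_apply, hv]
    exact main _
  rw [hmat, Matrix.det_mul, LinearMap.det_toMatrix]

end Aux

/-- Theorem on suspensions: if the system of `n` equations
`q'_j(t') = δ · q_j(t)`, `j = 1, …, n`, has no solution with `δ > 0`, `t > 0`,
`t' > 0`, then no invertible affine map of `ℝ³` carries the vertices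
`x₀, …, x_{n+1}` of the first suspension onto the corresponding vertices
`x'₀, …, x'_{n+1}` of the second one. -/
theorem suspensions_not_affine_equivalent (n : ℕ) (hn : 3 ≤ n)
    (x x' : ℕ → EuclideanSpace ℝ (Fin 3))
    (hx : x 0 ≠ x (n + 1)) (hx' : x' 0 ≠ x' (n + 1))
    (hsys : ¬ ∃ δ t t' : ℝ, 0 < δ ∧ 0 < t ∧ 0 < t' ∧
      ∀ j : ℕ, 1 ≤ j → j ≤ n → suspQ n x' j t' = δ * suspQ n x j t) :
    ¬ ∃ A : EuclideanSpace ℝ (Fin 3) →ᵃ[ℝ] EuclideanSpace ℝ (Fin 3),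
      Function.Bijective A ∧ ∀ i : ℕ, i ≤ n + 1 → A (x i) = x' i := by
  rintro ⟨A, hbij, hA⟩
  have hlin : Function.Bijective A.linear := (AffineMap.linear_bijective_iff A).mpr hbij
  have hdet : LinearMap.det A.linear ≠ 0 := by
    have h := LinearEquiv.isUnit_det' (LinearEquiv.ofBijective A.linear hlin)
    exact h.ne_zero
  apply hsys
  refine ⟨(LinearMap.det A.linear) ^ 2, dist (x 0) (x (n + 1)), dist (x' 0) (x' (n + 1)),
    pow_pos (abs_pos.mpr hdet) 2 |>.trans_le (by rw [sq_abs]),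
    dist_pos.mpr hx, dist_pos.mpr hx', ?_⟩
  intro j hj1 hjn
  set k : ℕ := if j < n then j + 1 else 1 with hk
  have hkn : k ≤ n + 1 := by rw [hk]; split_ifs <;> omega
  have e0 : A (x 0) = x' 0 := hA 0 (by omega)
  have ej : A (x j) = x' j := hA j (by omega)
  have ek : A (x k) = x' k := hA k hkn
  have eN : A (x (n + 1)) = x' (n + 1) := hA (n + 1) le_rfl
  have H1 : suspQ n x j (dist (x 0) (x (n + 1)))
      = 8 * (colMat (x 0) (x j) (x k) (x (n + 1))).det ^ 2 := by
    simp only [suspQ, ← hk]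
    exact cmQ_dist_eq _ _ _ _
  have H2 : suspQ n x' j (dist (x' 0) (x' (n + 1)))
      = 8 * (colMat (x' 0) (x' j) (x' k) (x' (n + 1))).det ^ 2 := by
    simp only [suspQ, ← hk]
    exact cmQ_dist_eq _ _ _ _
  have hc : colMat (x' 0) (x' j) (x' k) (x' (n + 1))
      = colMat (A (x 0)) (A (x j)) (A (x k)) (A (x (n + 1))) := by
    rw [e0, ej, ek, eN]
  rw [H1, H2, hc, colMat_affine]
  ring
end

section
/- Let n ≥ 3, let x₀, x₁, …, x_n, x_{n+1} be points of ℝ³ with x₀ ≠ x_{n+1}, let A : ℝ³ → ℝ³ be an invertible affine map with linear part L, and set x'_i = A x_i for i = 0,…,n+1. For j = 1,…,n set σ(j) = j+1 if j < n and σ(n) = 1, and define the polynomial q_j(t) as the determinant of the 5×5 matrix [[0,1,1,1,1],[1,0,a_j,b_j,t²],[1,a_j,0,c_j,e_j],[1,b_j,c_j,0,f_j],[1,t²,e_j,f_j,0]], where a_j = dist(x₀,x_j)², b_j = dist(x₀,x_{σ(j)})², c_j = dist(x_j,x_{σ(j)})², e_j = dist(x_j,x_{n+1})², f_j = dist(x_{σ(j)},x_{n+1})²;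 define q'_j(t') in the same way from the primed points. Then the numbers δ* = (det L)², t* = dist(x₀, x_{n+1}) and t'* = dist(x'₀, x'_{n+1}) are all positive and satisfy q'_j(t'*) = δ* · q_j(t*) for every j = 1,…,n. -/
section AuxiliaryLemmas

set_option maxHeartbeats 4000000 in
private lemma cmA_aux (g11 g12 g13 g22 g23 g33 : ℝ) :
    cmQ g11 g22 g33 (g11+g22-2*g12) (g11+g33-2*g13) (g22+g33-2*g23)
    = 8 * Matrix.det !![g11,g12,g13;g12,g22,g23;g13,g23,g33] := by
  unfold cmQ
  simp [Matrix.det_succ_row_zero (n := 4), Matrix.det_succ_row_zero (n := 3), Fin.sum_univ_succ, Matrix.det_fin_three, Matrix.submatrix_apply, Fin.succAbove]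
  ring

private lemma distsq_aux (p q : EuclideanSpace ℝ (Fin 3)) :
    dist p q ^ 2 = ∑ i, (p i - q i)^2 := by
  rw [EuclideanSpace.dist_eq, Real.sq_sqrt (by positivity)]
  simp [Real.dist_eq, sq_abs]

/-- coordinate matrix whose columns are the three given vectors -/
private noncomputable def dmat (v : Fin 3 → EuclideanSpace ℝ (Fin 3)) :
    Matrix (Fin 3) (Fin 3) ℝ :=
  Matrix.of fun i j => v j i

private lemma dmat_det_sq (v : Fin 3 → EuclideanSpace ℝ (Fin 3)) :
    (dmat v).det ^ 2 = Matrix.det !![∑ i, v 0 i * v 0 i, ∑ i, v 0 i * v 1 i, ∑ i, v 0 i * v 2 i;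
      ∑ i, v 0 i * v 1 i, ∑ i, v 1 i * v 1 i, ∑ i, v 1 i * v 2 i;
      ∑ i, v 0 i * v 2 i, ∑ i, v 1 i * v 2 i, ∑ i, v 2 i * v 2 i] := by
  have h : (dmat v).det ^ 2 = (Matrix.transpose (dmat v) * dmat v).det := by
    rw [Matrix.det_mul, Matrix.det_transpose, sq]
  rw [h, Matrix.det_fin_three, Matrix.det_fin_three]
  simp [Matrix.mul_apply, dmat, Fin.sum_univ_three]
  ring

private lemma cm_eq_s6 (p0 p1 p2 p3 : EuclideanSpace ℝ (Fin 3)) :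
    cmQ (dist p0 p1 ^ 2) (dist p0 p2 ^ 2) (dist p0 p3 ^ 2)
        (dist p1 p2 ^ 2) (dist p1 p3 ^ 2) (dist p2 p3 ^ 2)
    = 8 * (dmat ![p1 - p0, p2 - p0, p3 - p0]).det ^ 2 := by
  set v : Fin 3 → EuclideanSpace ℝ (Fin 3) := ![p1 - p0, p2 - p0, p3 - p0] with hv
  have h01 : dist p0 p1 ^ 2 = ∑ i, v 0 i * v 0 i := by
    rw [distsq_aux]; simp [hv, Fin.sum_univ_three]; ring
  have h02 : dist p0 p2 ^ 2 = ∑ i, v 1 i * v 1 i := by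
    rw [distsq_aux]; simp [hv, Fin.sum_univ_three]; ring
  have h03 : dist p0 p3 ^ 2 = ∑ i, v 2 i * v 2 i := by
    rw [distsq_aux]; simp [hv, Fin.sum_univ_three]; ring
  have h12 : dist p1 p2 ^ 2 =
      (∑ i, v 0 i * v 0 i) + (∑ i, v 1 i * v 1 i) - 2 * (∑ i, v 0 i * v 1 i) := by
    rw [distsq_aux]; simp [hv, Fin.sum_univ_three]; ring
  have h13 : dist p1 p3 ^ 2 =
      (∑ i, v 0 i * v 0 i) + (∑ i, v 2 i * v 2 i) - 2 * (∑ i, v 0 i * v 2 i) := by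
    rw [distsq_aux]; simp [hv, Fin.sum_univ_three]; ring
  have h23 : dist p2 p3 ^ 2 =
      (∑ i, v 1 i * v 1 i) + (∑ i, v 2 i * v 2 i) - 2 * (∑ i, v 1 i * v 2 i) := by
    rw [distsq_aux]; simp [hv, Fin.sum_univ_three]; ring
  rw [h01, h02, h03, h12, h13, h23, cmA_aux, dmat_det_sq]

private lemma dmat_map (L : EuclideanSpace ℝ (Fin 3) →ₗ[ℝ] EuclideanSpace ℝ (Fin 3))
    (v : Fin 3 → EuclideanSpace ℝ (Fin 3)) :
    dmat (fun j => L (v j)) = LinearMap.toMatrix (PiLp.basisFun 2 ℝ (Fin 3)) (PiLp.basisFun 2 ℝ (Fin 3)) L * dmat v := by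
  ext i j
  have hL := congrFun (LinearMap.toMatrix_mulVec_repr (PiLp.basisFun 2 ℝ (Fin 3)) (PiLp.basisFun 2 ℝ (Fin 3)) L (v j)) i
  simp only [PiLp.basisFun_repr] at hL
  show (L (v j)) i = _
  rw [← hL]
  simp [Matrix.mul_apply, Matrix.mulVec, dotProduct, dmat]

private lemma cm_affine (A : EuclideanSpace ℝ (Fin 3) →ᵃ[ℝ] EuclideanSpace ℝ (Fin 3))
    (p0 p1 p2 p3 : EuclideanSpace ℝ (Fin 3)) :
    cmQ (dist (A p0) (A p1) ^ 2) (dist (A p0) (A p2) ^ 2) (dist (A p0) (A p3) ^ 2)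
        (dist (A p1) (A p2) ^ 2) (dist (A p1) (A p3) ^ 2) (dist (A p2) (A p3) ^ 2)
    = (LinearMap.det A.linear) ^ 2 *
      cmQ (dist p0 p1 ^ 2) (dist p0 p2 ^ 2) (dist p0 p3 ^ 2)
          (dist p1 p2 ^ 2) (dist p1 p3 ^ 2) (dist p2 p3 ^ 2) := by
  rw [cm_eq_s6, cm_eq_s6]
  have hv : (![A p1 - A p0, A p2 - A p0, A p3 - A p0] : Fin 3 → EuclideanSpace ℝ (Fin 3))
      = fun j => A.linear (![p1 - p0, p2 - p0, p3 - p0] j) := by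
    funext j
    fin_cases j <;> simp [← vsub_eq_sub, ← AffineMap.linearMap_vsub]
  rw [hv, dmat_map, Matrix.det_mul]
  have hd : (LinearMap.toMatrix (PiLp.basisFun 2 ℝ (Fin 3)) (PiLp.basisFun 2 ℝ (Fin 3)) A.linear).det = LinearMap.det A.linear :=
    LinearMap.det_toMatrix (PiLp.basisFun 2 ℝ (Fin 3)) _
  rw [hd]
  ring

end AuxiliaryLemmas

/-- if `A : ℝ³ → ℝ³` is an invertible affine map with linear part `L`
and `x'_i = A x_i`, then `δ* = (det L)²`, `t* = dist(x₀, x_{n+1})` and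
`t'* = dist(x'₀, x'_{n+1})` are positive and satisfy
`q'_j(t'*) = δ* · q_j(t*)` for every `j = 1, …, n`. -/
theorem affine_equivalence_solves_suspension_system (n : ℕ) (hn : 3 ≤ n)
    (x : ℕ → EuclideanSpace ℝ (Fin 3)) (hx : x 0 ≠ x (n + 1))
    (A : EuclideanSpace ℝ (Fin 3) →ᵃ[ℝ] EuclideanSpace ℝ (Fin 3))
    (hA : Function.Bijective A)
    (x' : ℕ → EuclideanSpace ℝ (Fin 3)) (hx' : ∀ i : ℕ, x' i = A (x i)) :
    0 < (LinearMap.det A.linear) ^ 2 ∧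
      0 < dist (x 0) (x (n + 1)) ∧
      0 < dist (x' 0) (x' (n + 1)) ∧
      ∀ j : ℕ, 1 ≤ j → j ≤ n →
        suspQ n x' j (dist (x' 0) (x' (n + 1))) =
          (LinearMap.det A.linear) ^ 2 * suspQ n x j (dist (x 0) (x (n + 1))) := by
  have hb : Function.Bijective A.linear := (AffineMap.linear_bijective_iff A).2 hA
  have hLdet : LinearMap.det A.linear ≠ 0 := by
    have h := (LinearEquiv.ofBijective A.linear hb).isUnit_det'
    exact h.ne_zero
  have hx'ne : x' 0 ≠ x' (n + 1) := by
    rw [hx' 0, hx' (n + 1)]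
    exact fun h => hx (hA.1 h)
  refine ⟨pow_two_pos_of_ne_zero hLdet, dist_pos.2 hx, dist_pos.2 hx'ne, ?_⟩
  intro j _ _
  have key := cm_affine A (x 0) (x j) (x (if j < n then j + 1 else 1)) (x (n + 1))
  simp only [suspQ, hx']
  exact key
end

section
/- Let x₀, x₁, x₂, x₃, x₄ be points of ℝ³ with x₁ ≠ x₃ and x₂ ≠ x₄, let A : ℝ³ → ℝ³ be an invertible affine map with linear part L, and set x'_i = A x_i for i = 0,…,4. Define the polynomials: ⁴q₀(t,s) as the Cayley–Menger determinant of the quadruple (x₁,x₂,x₃,x₄) in which the two entries dist(x₁,x₃)² are replaced by t² and the two entries dist(x₂,x₄)² are replaced by s²; ⁴q₁(s) as that of (x₀,x₂,x₃,x₄) with dist(x₂,x₄)² replaced by s²; ⁴q₂(t) as that of (x₀,x₁,x₃,x₄) with dist(x₁,x₃)² replaced by t²; ⁴q₃(s) as that of (x₀,x₁,x₂,x₄) with dist(x₂,x₄)² replaced by s²; ⁴q₄(t) as that of (x₀,x₁,x₂,x₃) with dist(x₁,x₃)² replaced by t²; and define ⁴q'₀,…,⁴q'₄ in the same way from the primed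 points. Then the system of five equations ⁴q'₀(t',s') = α·⁴q₀(t,s), ⁴q'₁(s') = α·⁴q₁(s), ⁴q'₂(t') = α·⁴q₂(t), ⁴q'₃(s') = α·⁴q₃(s), ⁴q'₄(t') = α·⁴q₄(t) has a solution with α > 0, t > 0, s > 0, t' > 0, s' > 0; namely α = (det L)², t = dist(x₁,x₃), s = dist(x₂,x₄), t' = dist(x'₁,x'₃), s' = dist(x'₂,x'₄). -/
/-- `⁴q₀(t,s)`: the Cayley–Menger determinant of the quadruple `(x₁,x₂,x₃,x₄)`
in which `dist(x₁,x₃)²` is replaced by `t²` and `dist(x₂,x₄)²` by `s²`. -/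
noncomputable def q40 (x : Fin 5 → EuclideanSpace ℝ (Fin 3)) (t s : ℝ) : ℝ :=
  cmQ (dist (x 1) (x 2) ^ 2) (t ^ 2) (dist (x 1) (x 4) ^ 2)
      (dist (x 2) (x 3) ^ 2) (s ^ 2) (dist (x 3) (x 4) ^ 2)

/-- `⁴q₁(s)`: the Cayley–Menger determinant of the quadruple `(x₀,x₂,x₃,x₄)`
in which `dist(x₂,x₄)²` is replaced by `s²`. -/
noncomputable def q41 (x : Fin 5 → EuclideanSpace ℝ (Fin 3)) (s : ℝ) : ℝ :=
  cmQ (dist (x 0) (x 2) ^ 2) (dist (x 0) (x 3) ^ 2) (dist (x 0) (x 4) ^ 2)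
      (dist (x 2) (x 3) ^ 2) (s ^ 2) (dist (x 3) (x 4) ^ 2)

/-- `⁴q₂(t)`: the Cayley–Menger determinant of the quadruple `(x₀,x₁,x₃,x₄)`
in which `dist(x₁,x₃)²` is replaced by `t²`. -/
noncomputable def q42 (x : Fin 5 → EuclideanSpace ℝ (Fin 3)) (t : ℝ) : ℝ :=
  cmQ (dist (x 0) (x 1) ^ 2) (dist (x 0) (x 3) ^ 2) (dist (x 0) (x 4) ^ 2)
      (t ^ 2) (dist (x 1) (x 4) ^ 2) (dist (x 3) (x 4) ^ 2)

/-- `⁴q₃(s)`: the Cayley–Menger determinant of the quadruple `(x₀,x₁,x₂,x₄)`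
in which `dist(x₂,x₄)²` is replaced by `s²`. -/
noncomputable def q43 (x : Fin 5 → EuclideanSpace ℝ (Fin 3)) (s : ℝ) : ℝ :=
  cmQ (dist (x 0) (x 1) ^ 2) (dist (x 0) (x 2) ^ 2) (dist (x 0) (x 4) ^ 2)
      (dist (x 1) (x 2) ^ 2) (dist (x 1) (x 4) ^ 2) (s ^ 2)

/-- `⁴q₄(t)`: the Cayley–Menger determinant of the quadruple `(x₀,x₁,x₂,x₃)`
in which `dist(x₁,x₃)²` is replaced by `t²`. -/
noncomputable def q44 (x : Fin 5 → EuclideanSpace ℝ (Fin 3)) (t : ℝ) : ℝ :=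
  cmQ (dist (x 0) (x 1) ^ 2) (dist (x 0) (x 2) ^ 2) (dist (x 0) (x 3) ^ 2)
      (dist (x 1) (x 2) ^ 2) (t ^ 2) (dist (x 2) (x 3) ^ 2)

noncomputable section
abbrev E3 := EuclideanSpace ℝ (Fin 3)

lemma d2 (p q : E3) :
    dist p q ^ 2 = (p 0 - q 0)^2 + (p 1 - q 1)^2 + (p 2 - q 2)^2 := by
  rw [EuclideanSpace.dist_eq, Real.sq_sqrt (by positivity)]
  simp [Fin.sum_univ_three, Real.dist_eq, sq_abs]

def uvec (p : E3) : Fin 5 → ℝ := ![1, p 0, p 1, p 2, p 0^2 + p 1^2 + p 2^2]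
def evec : Fin 5 → ℝ := ![0,0,0,0,1]
def Um (y : Fin 4 → E3) : Matrix (Fin 5) (Fin 5) ℝ :=
  Matrix.of fun i j => ![evec i, uvec (y 0) i, uvec (y 1) i, uvec (y 2) i, uvec (y 3) i] j
def Fm : Matrix (Fin 5) (Fin 5) ℝ :=
  !![0,0,0,0,1; 0,-2,0,0,0; 0,0,-2,0,0; 0,0,0,-2,0; 1,0,0,0,0]

set_option maxHeartbeats 1000000 in
lemma detFm : Fm.det = 8 := by
  simp [Fm, Matrix.det_succ_row_zero, Fin.sum_univ_succ]
  simp [Fin.succAbove, Fin.lt_def]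
  norm_num

def cm4 (y : Fin 4 → E3) : ℝ :=
  Matrix.det !![0, 1, 1, 1, 1;
                1, 0, dist (y 0) (y 1) ^ 2, dist (y 0) (y 2) ^ 2, dist (y 0) (y 3) ^ 2;
                1, dist (y 0) (y 1) ^ 2, 0, dist (y 1) (y 2) ^ 2, dist (y 1) (y 3) ^ 2;
                1, dist (y 0) (y 2) ^ 2, dist (y 1) (y 2) ^ 2, 0, dist (y 2) (y 3) ^ 2;
                1, dist (y 0) (y 3) ^ 2, dist (y 1) (y 3) ^ 2, dist (y 2) (y 3) ^ 2, 0]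

set_option maxHeartbeats 2000000 in
lemma cm4_factor (y : Fin 4 → E3) : cm4 y = Matrix.det ((Um y).transpose * Fm * (Um y)) := by
  unfold cm4
  congr 1
  ext i j
  fin_cases i <;> fin_cases j <;>
    simp [Matrix.mul_apply, Fin.sum_univ_five, Um, Fm, uvec, evec, d2, Matrix.vecHead, Matrix.vecTail] <;> ring

def Vm (y : Fin 4 → E3) : Matrix (Fin 4) (Fin 4) ℝ :=
  Matrix.of fun i j => ![1, y j 0, y j 1, y j 2] i

lemma detUm (y : Fin 4 → E3) : (Um y).det = (Vm y).det := by
  rw [Matrix.det_succ_column_zero]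
  have h : ∀ i : Fin 5, Um y i 0 = evec i := fun i => rfl
  have h4 : ((4:Fin 5):ℕ) = 4 := rfl
  have hsub : (Um y).submatrix (Fin.succAbove 4) Fin.succ = Vm y := by
    ext i j
    fin_cases i <;> fin_cases j <;> rfl
  simp only [h, Fin.sum_univ_five, h4, hsub]
  norm_num [evec, Matrix.cons_val_two, Matrix.cons_val_three, Matrix.cons_val_four]

def bE : Module.Basis (Fin 3) ℝ E3 := (EuclideanSpace.basisFun (Fin 3) ℝ).toBasis

lemma bE_repr (v : E3) (i : Fin 3) : bE.repr v i = v i := by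
  simp [bE]

def Lm (A : E3 →ᵃ[ℝ] E3) : Matrix (Fin 3) (Fin 3) ℝ := LinearMap.toMatrix bE bE A.linear

lemma lin_coord (A : E3 →ᵃ[ℝ] E3) (v : E3) (m : Fin 3) :
    (A.linear v) m = ∑ k, Lm A m k * v k := by
  have h := congrFun (LinearMap.toMatrix_mulVec_repr bE bE A.linear v) m
  rw [show (A.linear v) m = bE.repr (A.linear v) m from (bE_repr _ m).symm, ← h]
  simp [Matrix.mulVec, dotProduct, Lm, bE_repr]

lemma aff_coord (A : E3 →ᵃ[ℝ] E3) (p : E3) (m : Fin 3) :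
    (A p) m = (A 0) m + ∑ k, Lm A m k * p k := by
  have h1 : A p = A.linear p + A 0 := by
    have := A.map_vadd 0 p
    simpa [vadd_eq_add] using this
  have h2 : (A.linear p + A 0) m = (A.linear p) m + (A 0) m := rfl
  rw [h1, h2, lin_coord]
  ring

def Tm (A : E3 →ᵃ[ℝ] E3) : Matrix (Fin 4) (Fin 4) ℝ :=
  !![1, 0, 0, 0;
     (A 0) 0, Lm A 0 0, Lm A 0 1, Lm A 0 2;
     (A 0) 1, Lm A 1 0, Lm A 1 1, Lm A 1 2;
     (A 0) 2, Lm A 2 0, Lm A 2 1, Lm A 2 2]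

lemma Vm_map (A : E3 →ᵃ[ℝ] E3) (y : Fin 4 → E3) :
    Vm (fun k => A (y k)) = Tm A * Vm y := by
  ext i j
  fin_cases i <;> fin_cases j <;>
    simp [Matrix.mul_apply, Fin.sum_univ_four, Vm, Tm, Matrix.vecHead, Matrix.vecTail] <;>
    (try rw [aff_coord]) <;> simp [Fin.sum_univ_three] <;> ring

lemma detTm (A : E3 →ᵃ[ℝ] E3) : (Tm A).det = LinearMap.det A.linear := by
  rw [Matrix.det_succ_row_zero]
  have hsub : (Tm A).submatrix Fin.succ (Fin.succAbove 0) = Lm A := by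
    ext i j
    fin_cases i <;> fin_cases j <;> rfl
  simp only [Fin.sum_univ_four, hsub]
  norm_num [Tm, Matrix.cons_val_two, Matrix.cons_val_three]
  rw [Lm, LinearMap.det_toMatrix]

lemma cm4_map (A : E3 →ᵃ[ℝ] E3) (y : Fin 4 → E3) :
    cm4 (fun k => A (y k)) = (LinearMap.det A.linear)^2 * cm4 y := by
  rw [cm4_factor, cm4_factor, Matrix.det_mul, Matrix.det_mul, Matrix.det_mul, Matrix.det_mul,
    Matrix.det_transpose, Matrix.det_transpose, detFm, detUm, detUm, Vm_map, Matrix.det_mul,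
    detTm]
  ring

lemma det_sq_pos (A : E3 →ᵃ[ℝ] E3) (hA : Function.Bijective A) :
    0 < (LinearMap.det A.linear)^2 := by
  have hb : Function.Bijective A.linear := (AffineMap.linear_bijective_iff A).2 hA
  have : LinearMap.det A.linear ≠ 0 := by
    have := (LinearEquiv.ofBijective A.linear hb).isUnit_det'
    exact this.ne_zero
  exact lt_of_le_of_ne (sq_nonneg _) (Ne.symm (pow_ne_zero 2 this))

lemma quad_map (x x' : Fin 5 → E3) (A : E3 →ᵃ[ℝ] E3) (hx' : ∀ i, x' i = A (x i))
    (a b c d : Fin 5) :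
    cm4 ![x' a, x' b, x' c, x' d] =
      (LinearMap.det A.linear)^2 * cm4 ![x a, x b, x c, x d] := by
  have h : (![x' a, x' b, x' c, x' d] : Fin 4 → E3) = fun k => A (![x a, x b, x c, x d] k) := by
    funext k; fin_cases k <;> simp [hx']
  rw [h, cm4_map]

end

/-- Lemma 2 of the paper: if `x₀,…,x₄ ∈ ℝ³` (with `x₁ ≠ x₃`,
`x₂ ≠ x₄`) are carried by an invertible affine map `A` with linear part `L` to
`x'₀,…,x'₄`, then the system `⁴q'_j = α · ⁴q_j` has an all-positive solution,
namely `α = (det L)²`, `t = dist(x₁,x₃)`, `s = dist(x₂,x₄)`, `t' = dist(x'₁,x'₃)`,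
`s' = dist(x'₂,x'₄)`. -/


theorem valency_four_system_has_positive_solution
    (x : Fin 5 → EuclideanSpace ℝ (Fin 3)) (h13 : x 1 ≠ x 3) (h24 : x 2 ≠ x 4)
    (A : EuclideanSpace ℝ (Fin 3) →ᵃ[ℝ] EuclideanSpace ℝ (Fin 3))
    (hA : Function.Bijective A)
    (x' : Fin 5 → EuclideanSpace ℝ (Fin 3)) (hx' : ∀ i, x' i = A (x i)) :
    0 < (LinearMap.det A.linear) ^ 2 ∧
      0 < dist (x 1) (x 3) ∧ 0 < dist (x 2) (x 4) ∧
      0 < dist (x' 1) (x' 3) ∧ 0 < dist (x' 2) (x' 4) ∧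
      q40 x' (dist (x' 1) (x' 3)) (dist (x' 2) (x' 4)) =
        (LinearMap.det A.linear) ^ 2 * q40 x (dist (x 1) (x 3)) (dist (x 2) (x 4)) ∧
      q41 x' (dist (x' 2) (x' 4)) =
        (LinearMap.det A.linear) ^ 2 * q41 x (dist (x 2) (x 4)) ∧
      q42 x' (dist (x' 1) (x' 3)) =
        (LinearMap.det A.linear) ^ 2 * q42 x (dist (x 1) (x 3)) ∧
      q43 x' (dist (x' 2) (x' 4)) =
        (LinearMap.det A.linear) ^ 2 * q43 x (dist (x 2) (x 4)) ∧
      q44 x' (dist (x' 1) (x' 3)) =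
        (LinearMap.det A.linear) ^ 2 * q44 x (dist (x 1) (x 3)) := by
  have h13' : x' 1 ≠ x' 3 := by
    rw [hx' 1, hx' 3]; exact fun h => h13 (hA.injective h)
  have h24' : x' 2 ≠ x' 4 := by
    rw [hx' 2, hx' 4]; exact fun h => h24 (hA.injective h)
  have b40 : ∀ z : Fin 5 → E3, q40 z (dist (z 1) (z 3)) (dist (z 2) (z 4)) =
      cm4 ![z 1, z 2, z 3, z 4] := fun z => by simp [q40, cm4, cmQ]
  have b41 : ∀ z : Fin 5 → E3, q41 z (dist (z 2) (z 4)) =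
      cm4 ![z 0, z 2, z 3, z 4] := fun z => by simp [q41, cm4, cmQ]
  have b42 : ∀ z : Fin 5 → E3, q42 z (dist (z 1) (z 3)) =
      cm4 ![z 0, z 1, z 3, z 4] := fun z => by simp [q42, cm4, cmQ]
  have b43 : ∀ z : Fin 5 → E3, q43 z (dist (z 2) (z 4)) =
      cm4 ![z 0, z 1, z 2, z 4] := fun z => by simp [q43, cm4, cmQ]
  have b44 : ∀ z : Fin 5 → E3, q44 z (dist (z 1) (z 3)) =
      cm4 ![z 0, z 1, z 2, z 3] := fun z => by simp [q44, cm4, cmQ]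
  refine ⟨det_sq_pos A hA, dist_pos.2 h13, dist_pos.2 h24, dist_pos.2 h13', dist_pos.2 h24',
    ?_, ?_, ?_, ?_, ?_⟩
  · rw [b40, b40, quad_map x x' A hx']
  · rw [b41, b41, quad_map x x' A hx']
  · rw [b42, b42, quad_map x x' A hx']
  · rw [b43, b43, quad_map x x' A hx']
  · rw [b44, b44, quad_map x x' A hx']
end
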